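/- arXiv:0804.0840 — 3 statements merged into one kernel-verified Lean document; each statement's English description precedes it below -/
import Mathlib

section
/- For every number of colors k there exists a constant C(k) > 0 such that for all sufficiently large n, for any partition of {1,2,...,n} into sets A_1,...,A_k, the total number of monochromatic Schur triples, i.e. triples (x,y,z) with x,y,z all in the same A_i and x+y=z, is at least C(k)·n². -/
def schurR : ℕ → ℕ
  | 0 => 2
  | (m+1) => (m+1) * schurR m + 2

lemma ramsey_aux (m : ℕ) : ∀ (k : ℕ) (f : ℕ → ℕ → Fin k) (T : Finset (Fin k))
    (S : Finset ℕ), T.card = m → (∀ u ∈ S, ∀ v ∈ S, u < v → f u v ∈ T) →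
    schurR m ≤ S.card →
    ∃ u ∈ S, ∃ v ∈ S, ∃ w ∈ S, u < v ∧ v < w ∧ f u v = f v w ∧ f u v = f u w := by
  induction m with
  | zero =>
    intro k f T S hT hcol hcard
    have h2 : 1 < S.card := by simp [schurR] at hcard; omega
    obtain ⟨u, hu, v, hv, huv⟩ := Finset.one_lt_card.mp h2
    rcases lt_or_gt_of_ne huv with h | h
    · exact absurd (hcol u hu v hv h) (by simp [Finset.card_eq_zero.mp hT])
    · exact absurd (hcol v hv u hu h) (by simp [Finset.card_eq_zero.mp hT])
  | succ m ih =>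
    intro k f T S hT hcol hcard
    have hS_ne : S.Nonempty := Finset.card_pos.mp (by simp [schurR] at hcard; omega)
    set x := S.min' hS_ne with hx
    have hxS : x ∈ S := S.min'_mem hS_ne
    set S' := S.erase x with hS'
    have hS'card : S'.card = S.card - 1 := Finset.card_erase_of_mem hxS
    have hmaps : ∀ y ∈ S', f x y ∈ T := by
      intro y hy
      have hyS : y ∈ S := Finset.mem_of_mem_erase hy
      have hxy : x < y := lt_of_le_of_ne (S.min'_le y hyS) (Ne.symm (Finset.ne_of_mem_erase hy))
      exact hcol x hxS y hyS hxy
    have hlt : T.card * schurR m < S'.card := by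
      rw [hT, hS'card]
      simp only [schurR] at hcard
      omega
    obtain ⟨i, hiT, hNi⟩ := Finset.exists_lt_card_fiber_of_mul_lt_card_of_maps_to hmaps hlt
    set N := S'.filter (fun y => f x y = i) with hN
    have hNsub : N ⊆ S := fun y hy => Finset.mem_of_mem_erase (Finset.mem_filter.mp hy).1
    by_cases hcase : ∃ u ∈ N, ∃ v ∈ N, u < v ∧ f u v = i
    · obtain ⟨u, hu, v, hv, huv, hfi⟩ := hcase
      have hxu : x < u := lt_of_le_of_ne (S.min'_le u (hNsub hu))
        (Ne.symm (Finset.ne_of_mem_erase (Finset.mem_filter.mp hu).1))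
      have h1 : f x u = i := (Finset.mem_filter.mp hu).2
      have h2 : f x v = i := (Finset.mem_filter.mp hv).2
      exact ⟨x, hxS, u, hNsub hu, v, hNsub hv, hxu, huv, by rw [h1, hfi], by rw [h1, h2]⟩
    · push_neg at hcase
      have hcol' : ∀ u ∈ N, ∀ v ∈ N, u < v → f u v ∈ T.erase i := by
        intro u hu v hv huv
        exact Finset.mem_erase.mpr ⟨hcase u hu v hv huv, hcol u (hNsub hu) v (hNsub hv) huv⟩
      obtain ⟨u, hu, v, hv, w, hw, h⟩ := ih k f (T.erase i) N
        (by rw [Finset.card_erase_of_mem hiT, hT]; omega) hcol' (le_of_lt hNi)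
      exact ⟨u, hNsub hu, v, hNsub hv, w, hNsub hw, h⟩

lemma two_le_schurR (m : ℕ) : 2 ≤ schurR m := by
  cases m <;> simp [schurR]

lemma choose_id (a b : ℕ) :
    (a+3).choose (b+3) * ((b+3)*((b+2)*(b+1)))
      = ((a+3)*((a+2)*(a+1))) * a.choose b := by
  have h1 : (a+3).choose (b+3) * (b+3) = (a+3) * (a+2).choose (b+2) :=
    (Nat.add_one_mul_choose_eq (a+2) (b+2)).symm
  have h2 : (a+2).choose (b+2) * (b+2) = (a+2) * (a+1).choose (b+1) :=
    (Nat.add_one_mul_choose_eq (a+1) (b+1)).symm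
  have h3 : (a+1).choose (b+1) * (b+1) = (a+1) * a.choose b :=
    (Nat.add_one_mul_choose_eq a b).symm
  calc (a+3).choose (b+3) * ((b+3)*((b+2)*(b+1)))
      = ((a+3).choose (b+3) * (b+3)) * (b+2) * (b+1) := by ring
    _ = (a+3) * (((a+2).choose (b+2) * (b+2)) * (b+1)) := by rw [h1]; ring
    _ = (a+3) * ((a+2) * ((a+1).choose (b+1) * (b+1))) := by rw [h2]; ring
    _ = (a+3) * ((a+2) * ((a+1) * a.choose b)) := by rw [h3]
    _ = ((a+3)*((a+2)*(a+1))) * a.choose b := by ring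

/-- For every number of colors `k` there is a constant `C > 0` such that for all
sufficiently large `n`, any `k`-coloring of `{1,…,n}` yields at least `C·n²`
monochromatic Schur triples `(x, y, x+y)`. -/
theorem schur_triples_lower_bound :
    ∀ k : ℕ, 0 < k → ∃ C : ℝ, 0 < C ∧ ∃ n₀ : ℕ, ∀ n ≥ n₀, ∀ c : ℕ → Fin k,
      C * (n : ℝ) ^ 2 ≤
        (((Finset.Icc 1 n) ×ˢ (Finset.Icc 1 n)).filter
          (fun p => p.1 + p.2 ≤ n ∧ c p.1 = c p.2 ∧ c p.1 = c (p.1 + p.2))).card := by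
  intro k hk
  set R := schurR k with hRdef
  have hR4 : 4 ≤ R := by
    obtain ⟨m, rfl⟩ := Nat.exists_eq_succ_of_ne_zero (Nat.pos_iff_ne_zero.mp hk)
    have h2 : 2 ≤ schurR m := two_le_schurR m
    have h3 : schurR m ≤ (m + 1) * schurR m := Nat.le_mul_of_pos_left _ (by omega)
    have h4 : R = (m + 1) * schurR m + 2 := rfl
    omega
  set Q : ℕ := R * ((R-1) * (R-2)) with hQdef
  have hQpos : 0 < Q := by
    apply Nat.mul_pos (by omega) (Nat.mul_pos (by omega) (by omega))
  refine ⟨1 / (2 * (Q : ℝ)), by positivity, max R 6, ?_⟩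
  intro n hn c
  have hnR : R ≤ n := le_trans (le_max_left _ _) hn
  have hn6 : 6 ≤ n := le_trans (le_max_right _ _) hn
  set I := Finset.Icc 1 n with hIdef
  have hIcard : I.card = n := by simp [hIdef]
  set P := (I ×ˢ I).filter
      (fun p => p.1 + p.2 ≤ n ∧ c p.1 = c p.2 ∧ c p.1 = c (p.1 + p.2)) with hPdef
  set Tri := (I ×ˢ I ×ˢ I).filter
      (fun t => t.1 < t.2.1 ∧ t.2.1 < t.2.2 ∧
        c (t.2.1 - t.1) = c (t.2.2 - t.2.1) ∧ c (t.2.1 - t.1) = c (t.2.2 - t.1)) with hTdef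
  -- Step A: every R-subset of I contains a mono triangle
  have stepA : n.choose R ≤
      ∑ S ∈ Finset.powersetCard R I,
        (Tri.filter (fun t => t.1 ∈ S ∧ t.2.1 ∈ S ∧ t.2.2 ∈ S)).card := by
    have hcardpc : (Finset.powersetCard R I).card = n.choose R := by
      rw [Finset.card_powersetCard, hIcard]
    calc n.choose R = ∑ _S ∈ Finset.powersetCard R I, 1 := by
          rw [Finset.sum_const, smul_eq_mul, mul_one, hcardpc]
      _ ≤ _ := by
          apply Finset.sum_le_sum
          intro S hS
          rw [Finset.mem_powersetCard] at hS
          obtain ⟨u, hu, v, hv, w, hw, huv, hvw, hm1, hm2⟩ :=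
            ramsey_aux k k (fun u v => c (v - u)) Finset.univ S
              (by simp) (fun _ _ _ _ _ => Finset.mem_univ _) (by rw [hS.2])
          rw [Nat.one_le_iff_ne_zero, ← Nat.pos_iff_ne_zero, Finset.card_pos]
          refine ⟨(u, v, w), ?_⟩
          simp only [Finset.mem_filter, hTdef, Finset.mem_product]
          exact ⟨⟨⟨hS.1 hu, hS.1 hv, hS.1 hw⟩, huv, hvw, hm1, hm2⟩, hu, hv, hw⟩
  -- Step B: swap the double counting
  have stepB : ∑ S ∈ Finset.powersetCard R I,
        (Tri.filter (fun t => t.1 ∈ S ∧ t.2.1 ∈ S ∧ t.2.2 ∈ S)).card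
      = ∑ t ∈ Tri,
        ((Finset.powersetCard R I).filter
          (fun S => t.1 ∈ S ∧ t.2.1 ∈ S ∧ t.2.2 ∈ S)).card := by
    simp only [Finset.card_filter]
    exact Finset.sum_comm
  -- Step C: each triangle lies in at most (n-3).choose (R-3) subsets
  have stepC : ∀ t ∈ Tri,
      ((Finset.powersetCard R I).filter
        (fun S => t.1 ∈ S ∧ t.2.1 ∈ S ∧ t.2.2 ∈ S)).card ≤ (n-3).choose (R-3) := by
    rintro ⟨u, v, w⟩ ht
    simp only [hTdef, Finset.mem_filter, Finset.mem_product] at ht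
    obtain ⟨⟨huI, hvI, hwI⟩, huv, hvw, -, -⟩ := ht
    have hD3 : ({u, v, w} : Finset ℕ).card = 3 :=
      Finset.card_eq_three.mpr ⟨u, v, w, by omega, by omega, by omega, rfl⟩
    have hDI : ({u, v, w} : Finset ℕ) ⊆ I := by
      intro x hx
      simp only [Finset.mem_insert, Finset.mem_singleton] at hx
      rcases hx with rfl | rfl | rfl <;> assumption
    have htarget : (Finset.powersetCard (R-3) (I \ {u, v, w})).card = (n-3).choose (R-3) := by
      rw [Finset.card_powersetCard, Finset.card_sdiff_of_subset hDI, hIcard, hD3]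
    rw [← htarget]
    apply Finset.card_le_card_of_injOn (fun S => S \ {u, v, w})
    · intro S hS
      simp only [Finset.mem_coe, Finset.mem_filter, Finset.mem_powersetCard] at hS ⊢
      obtain ⟨⟨hSI, hScard⟩, hu, hv, hw⟩ := hS
      have hDS : ({u, v, w} : Finset ℕ) ⊆ S := by
        intro x hx
        simp only [Finset.mem_insert, Finset.mem_singleton] at hx
        rcases hx with rfl | rfl | rfl <;> assumption
      constructor
      · exact Finset.sdiff_subset_sdiff hSI (le_refl _)
      · rw [Finset.card_sdiff_of_subset hDS, hScard, hD3]
    · intro S1 h1 S2 h2 heq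
      simp only [Finset.coe_filter, Set.mem_setOf_eq, Finset.mem_powersetCard] at h1 h2
      have hDS1 : ({u, v, w} : Finset ℕ) ⊆ S1 := by
        intro x hx
        simp only [Finset.mem_insert, Finset.mem_singleton] at hx
        rcases hx with rfl | rfl | rfl <;> tauto
      have hDS2 : ({u, v, w} : Finset ℕ) ⊆ S2 := by
        intro x hx
        simp only [Finset.mem_insert, Finset.mem_singleton] at hx
        rcases hx with rfl | rfl | rfl <;> tauto
      dsimp only at heq
      calc S1 = S1 \ {u,v,w} ∪ {u,v,w} := (Finset.sdiff_union_of_subset hDS1).symm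
        _ = S2 \ {u,v,w} ∪ {u,v,w} := by rw [heq]
        _ = S2 := Finset.sdiff_union_of_subset hDS2
  -- Step D: number of triangles is at most P.card * n
  have stepD : Tri.card ≤ P.card * n := by
    have : Tri.card ≤ (P ×ˢ I).card := by
      apply Finset.card_le_card_of_injOn
        (fun t => ((t.2.1 - t.1, t.2.2 - t.2.1), t.1))
      · rintro ⟨u, v, w⟩ ht
        simp only [Finset.mem_coe, hTdef, Finset.mem_filter, Finset.mem_product] at ht
        obtain ⟨⟨huI, hvI, hwI⟩, huv, hvw, hm1, hm2⟩ := ht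
        simp only [hIdef, Finset.mem_Icc] at huI hvI hwI
        simp only [Finset.mem_coe, Finset.mem_product, hPdef, Finset.mem_filter, hIdef, Finset.mem_Icc]
        have hxy : v - u + (w - v) = w - u := by omega
        refine ⟨⟨⟨⟨by omega, by omega⟩, by omega, by omega⟩, by omega, ?_, ?_⟩, by omega, by omega⟩
        · exact hm1
        · rw [hxy]; exact hm2
      · rintro ⟨u1, v1, w1⟩ h1 ⟨u2, v2, w2⟩ h2 heq
        simp only [hTdef, Finset.coe_filter, Set.mem_setOf_eq, Finset.mem_product] at h1 h2
        simp only [Prod.mk.injEq] at heq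
        obtain ⟨⟨hx, hy⟩, hu⟩ := heq
        have e1 := h1.2.1
        have e2 := h1.2.2.1
        have e3 := h2.2.1
        have e4 := h2.2.2.1
        simp only [Prod.mk.injEq]
        omega
    rwa [Finset.card_product, hIcard] at this
  -- Combine the counting steps
  have hch : n.choose R ≤ P.card * n * ((n-3).choose (R-3)) := by
    calc n.choose R ≤ ∑ t ∈ Tri, ((Finset.powersetCard R I).filter
          (fun S => t.1 ∈ S ∧ t.2.1 ∈ S ∧ t.2.2 ∈ S)).card := by rw [← stepB]; exact stepA
      _ ≤ ∑ _t ∈ Tri, (n-3).choose (R-3) := Finset.sum_le_sum stepC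
      _ = Tri.card * ((n-3).choose (R-3)) := by rw [Finset.sum_const, smul_eq_mul]
      _ ≤ P.card * n * ((n-3).choose (R-3)) :=
          Nat.mul_le_mul_right _ stepD
  -- The binomial identity
  obtain ⟨a, han⟩ : ∃ a, n = a + 3 := ⟨n - 3, by omega⟩
  obtain ⟨b, hbR⟩ : ∃ b, R = b + 3 := ⟨R - 3, by omega⟩
  have hid : n.choose R * Q = (n * ((n-1) * (n-2))) * ((n-3).choose (R-3)) := by
    have := choose_id a b
    have hq : Q = (b+3)*((b+2)*(b+1)) := by rw [hQdef, hbR]; congr 1 <;> omega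
    rw [han, hbR, hq]
    have h1 : a + 3 - 3 = a := by omega
    have h2 : b + 3 - 3 = b := by omega
    rw [h1, h2]
    rw [this]
    congr 2 <;> omega
  -- cancel the positive factors
  have hchpos : 0 < (n-3).choose (R-3) := Nat.choose_pos (by omega)
  have key : (n-1) * (n-2) ≤ P.card * Q := by
    have step1 : (n * ((n-1) * (n-2))) * ((n-3).choose (R-3))
        ≤ (P.card * Q * n) * ((n-3).choose (R-3)) := by
      rw [← hid]
      calc n.choose R * Q ≤ (P.card * n * ((n-3).choose (R-3))) * Q :=
            Nat.mul_le_mul_right _ hch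
        _ = (P.card * Q * n) * ((n-3).choose (R-3)) := by ring
    have step2 : n * ((n-1) * (n-2)) ≤ P.card * Q * n :=
      Nat.le_of_mul_le_mul_right step1 hchpos
    have step3 : ((n-1) * (n-2)) * n ≤ (P.card * Q) * n := by
      calc ((n-1) * (n-2)) * n = n * ((n-1) * (n-2)) := by ring
        _ ≤ P.card * Q * n := step2
    exact Nat.le_of_mul_le_mul_right step3 (by omega)
  have keyn : n ^ 2 ≤ 2 * Q * P.card := by
    have h1 : n ^ 2 ≤ 2 * ((n-1) * (n-2)) := by
      obtain ⟨m, hm⟩ : ∃ m, n = m + 6 := ⟨n - 6, by omega⟩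
      have e1 : n - 1 = m + 5 := by omega
      have e2 : n - 2 = m + 4 := by omega
      rw [hm, show m+6-1 = m+5 from rfl, show m+6-2 = m+4 from rfl]; nlinarith
    calc n ^ 2 ≤ 2 * ((n-1) * (n-2)) := h1
      _ ≤ 2 * (P.card * Q) := Nat.mul_le_mul_left _ key
      _ = 2 * Q * P.card := by ring
  -- conclude over the reals
  rw [div_mul_eq_mul_div, one_mul, div_le_iff₀ (by positivity)]
  calc ((n : ℝ)) ^ 2 = ((n ^ 2 : ℕ) : ℝ) := by push_cast; ring
    _ ≤ ((2 * Q * P.card : ℕ) : ℝ) := by exact_mod_cast keyn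
    _ = (P.card : ℝ) * (2 * (Q : ℝ)) := by push_cast; ring
end

section
/- Let N be a prime, R a subset of Z/NZ with |R| = m, let 0 < ε < 1/2 and 0 < κ < 1. Define B = {x ∈ Z/NZ : x (as an integer in (-N/2, N/2]) lies in [-κN, κN] and ‖x r / N‖ ≤ 2ε for all r ∈ R}, where ‖·‖ denotes distance to the nearest integer. Then |B| ≥ ε^m · κ · N (up to a floor in the count of the interval [-κN/2, κN/2]). -/
/-- Distance from a real number to the nearest integer. -/
noncomputable def nint (α : ℝ) : ℝ := |α - round α|

set_option maxHeartbeats 1000000 in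
/-- Bohr-set lower bound: for `N` prime, `R ⊆ ℤ/Nℤ` with `|R| = m`,
`0 < ε < 1/2` and `0 < κ < 1`, the Bohr set
`B = {x : |x| ≤ κN and ‖xr/N‖ ≤ 2ε for all r ∈ R}` satisfies
`|B| ≥ ε^m (κN - 1)` (the `-1` accounts for the floor). -/
theorem bohr_set_lower_bound (N : ℕ) [Fact N.Prime] (R : Finset (ZMod N)) (m : ℕ)
    (hm : R.card = m) (ε κ : ℝ) (hε : 0 < ε) (hε' : ε < 1 / 2)
    (hκ : 0 < κ) (hκ' : κ < 1) :
    ε ^ m * (κ * N - 1) ≤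
      ({x : ZMod N | |(x.valMinAbs : ℝ)| ≤ κ * N ∧
        ∀ r ∈ R, nint (((x * r).val : ℝ) / N) ≤ 2 * ε} : Set (ZMod N)).ncard := by
  classical
  set B : Set (ZMod N) := {x : ZMod N | |(x.valMinAbs : ℝ)| ≤ κ * N ∧
        ∀ r ∈ R, nint (((x * r).val : ℝ) / N) ≤ 2 * ε} with hBdef
  rcases le_or_gt (κ * N - 1) 0 with h0 | h0
  · have : ε ^ m * (κ * N - 1) ≤ 0 :=
      mul_nonpos_of_nonneg_of_nonpos (pow_nonneg hε.le m) h0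
    exact this.trans (Nat.cast_nonneg _)
  have hNprime : N.Prime := Fact.out
  have hN2 : 2 ≤ N := hNprime.two_le
  have hNpos : (0 : ℝ) < N := by exact_mod_cast hNprime.pos
  -- the parameter d
  set d : ℕ := ⌊1 / ε⌋₊ with hddef
  have h2ε : (2 : ℝ) ≤ 1 / ε := by
    rw [le_div_iff₀ hε]; linarith
  have hd2 : 2 ≤ d := Nat.le_floor h2ε
  have hdpos : 0 < d := by omega
  have hdposR : (0 : ℝ) < d := by exact_mod_cast hdpos
  have hdle : (d : ℝ) ≤ 1 / ε := Nat.floor_le (by positivity)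
  have hεd : ε ≤ 1 / (d : ℝ) := by
    rw [le_div_iff₀ hdposR]
    calc ε * d ≤ ε * (1 / ε) := by nlinarith
      _ = 1 := by field_simp
  have hd2ε : 1 / (d : ℝ) < 2 * ε := by
    have h1 : 1 / ε < (d : ℝ) + 1 := Nat.lt_floor_add_one (1 / ε)
    rw [div_lt_iff₀ hε] at h1
    rw [div_lt_iff₀ hdposR]
    nlinarith
  -- the set S
  set S : Finset (ZMod N) :=
    Finset.univ.filter (fun x => |(x.valMinAbs : ℝ)| ≤ κ * N / 2) with hSdef
  -- lower bound on |S|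
  have hScard : κ * N - 1 ≤ S.card := by
    set M : ℤ := ⌊κ * N / 2⌋ with hMdef
    have hM0 : 0 ≤ M := Int.le_floor.2 (by push_cast; positivity)
    have hMle : (M : ℝ) ≤ κ * N / 2 := Int.floor_le _
    have hinj : Set.InjOn (fun a : ℤ => (a : ZMod N)) (Finset.Icc (-M) M) := by
      intro a ha b hb hab
      simp only [Finset.coe_Icc, Set.mem_Icc] at ha hb
      have hdvd : (N : ℤ) ∣ a - b := (ZMod.intCast_eq_intCast_iff_dvd_sub b a N).mp hab.symm
      have habs : |a - b| < N := by
        have : (|(a : ℝ) - b|) < N := by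
          rw [abs_sub_lt_iff]
          constructor <;> push_cast <;> nlinarith [ha.1, ha.2, hb.1, hb.2,
            (by exact_mod_cast ha.1 : (-(M:ℝ)) ≤ a), (by exact_mod_cast ha.2 : (a:ℝ) ≤ M),
            (by exact_mod_cast hb.1 : (-(M:ℝ)) ≤ b), (by exact_mod_cast hb.2 : (b:ℝ) ≤ M)]
        exact_mod_cast (by push_cast; exact this : (|a - b| : ℝ) < N)
      have := Int.eq_zero_of_abs_lt_dvd hdvd (by exact_mod_cast habs)
      linarith
    have hmaps : ∀ a ∈ Finset.Icc (-M) M, (a : ZMod N) ∈ S := by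
      intro a ha
      simp only [Finset.mem_Icc] at ha
      have hNe : NeZero N := ⟨hNprime.ne_zero⟩
      have h1 : ((a : ZMod N)).valMinAbs.natAbs ≤ a.natAbs := by
        apply ZMod.natAbs_min_of_le_div_two N _ a
        · rw [ZMod.coe_valMinAbs]
        · exact ZMod.natAbs_valMinAbs_le _
      have h2 : |((a : ZMod N).valMinAbs : ℝ)| ≤ |(a : ℝ)| := by
        rw [← Int.cast_abs, ← Int.cast_abs, Int.cast_le, Int.abs_eq_natAbs, Int.abs_eq_natAbs]
        exact_mod_cast h1
      simp only [hSdef, Finset.mem_filter, Finset.mem_univ, true_and]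
      refine h2.trans ?_
      rw [abs_le]
      constructor
      · push_cast; nlinarith [(by exact_mod_cast ha.1 : (-(M:ℝ)) ≤ a)]
      · nlinarith [(by exact_mod_cast ha.2 : (a:ℝ) ≤ M)]
    have hcard : (Finset.Icc (-M) M).card ≤ S.card := by
      apply Finset.card_le_card_of_injOn _ hmaps hinj
    have hIcc : (Finset.Icc (-M) M).card = (2 * M + 1).toNat := by
      rw [Int.card_Icc]; congr 1; ring
    have : (2 * (M:ℝ) + 1 : ℝ) ≤ S.card := by
      rw [hIcc] at hcard
      have := Int.toNat_of_nonneg (by linarith : (0:ℤ) ≤ 2 * M + 1)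
      have hc : ((2 * M + 1 : ℤ) : ℝ) ≤ S.card := by
        rw [← this]; exact_mod_cast hcard
      push_cast at hc; linarith
    have hMge : κ * N / 2 - 1 ≤ (M : ℝ) := by
      have := Int.sub_one_lt_floor (κ * N / 2); linarith
    linarith
  -- the coloring map
  have hvalltN : ∀ z : ZMod N, ((z.val : ℝ)) < N := by
    intro z
    exact_mod_cast ZMod.val_lt z
  set f : ZMod N → (↥R → Fin d) := fun x r =>
    ⟨⌊(d : ℝ) * ((x * (r : ZMod N)).val : ℝ) / N⌋₊, by
      apply Nat.floor_lt (by positivity) |>.2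
      rw [div_lt_iff₀ hNpos]
      have := hvalltN (x * (r : ZMod N))
      have hv0 : (0:ℝ) ≤ ((x * (r : ZMod N)).val : ℝ) := Nat.cast_nonneg _
      nlinarith⟩ with hfdef
  -- pigeonhole
  have hcardfun : (Fintype.card (↥R → Fin d) : ℝ) = (d : ℝ) ^ m := by
    rw [Fintype.card_fun, Fintype.card_coe, Fintype.card_fin, hm]; push_cast; ring
  have hpig : ∃ y : ↥R → Fin d,
      (S.card : ℝ) ≤ (d : ℝ) ^ m * ((S.filter fun x => f x = y).card) := by
    by_contra hcon
    push_neg at hcon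
    have hsum : S.card = ∑ y : ↥R → Fin d, (S.filter fun x => f x = y).card :=
      Finset.card_eq_sum_card_fiberwise (fun x _ => Finset.mem_univ _)
    haveI : Nonempty (Fin d) := ⟨⟨0, hdpos⟩⟩
    have hne : (Finset.univ : Finset (↥R → Fin d)).Nonempty := Finset.univ_nonempty
    have hlt : ∑ y : ↥R → Fin d, ((S.filter fun x => f x = y).card : ℝ) <
        ∑ _y : ↥R → Fin d, (S.card : ℝ) / (d : ℝ) ^ m := by
      apply Finset.sum_lt_sum_of_nonempty hne
      intro y _
      have := hcon y
      rw [lt_div_iff₀ (by positivity)]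
      linarith
    rw [Finset.sum_const, nsmul_eq_mul, Finset.card_univ] at hlt
    have hcast : ((S.card : ℕ) : ℝ) = ∑ y : ↥R → Fin d, ((S.filter fun x => f x = y).card : ℝ) := by
      rw [hsum]; push_cast; ring
    rw [← hcast, hcardfun] at hlt
    have : (S.card : ℝ) < S.card := by
      calc (S.card : ℝ) < (d:ℝ)^m * ((S.card : ℝ) / (d:ℝ)^m) := hlt
        _ = S.card := by field_simp
    linarith
  obtain ⟨y, hy⟩ := hpig
  set F : Finset (ZMod N) := S.filter (fun x => f x = y) with hFdef
  have hFne : F.Nonempty := by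
    rw [← Finset.card_pos]
    by_contra hc
    push_neg at hc
    have h00 : F.card = 0 := Nat.le_zero.mp hc
    have hy' : (S.card : ℝ) ≤ 0 := by
      have := hy
      rw [h00] at this
      simpa using this
    linarith
  obtain ⟨x₀, hx₀⟩ := hFne
  have hx₀S : x₀ ∈ S := (Finset.mem_filter.1 hx₀).1
  have hx₀f : f x₀ = y := (Finset.mem_filter.1 hx₀).2
  -- key membership
  have hmem : ∀ x ∈ F, x - x₀ ∈ B := by
    intro x hx
    have hxS : x ∈ S := (Finset.mem_filter.1 hx).1
    have hxf : f x = f x₀ := by rw [(Finset.mem_filter.1 hx).2, hx₀f]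
    have hxv : |((x.valMinAbs : ℤ) : ℝ)| ≤ κ * N / 2 := by
      have := (Finset.mem_filter.1 hxS).2; exact this
    have hx₀v : |((x₀.valMinAbs : ℤ) : ℝ)| ≤ κ * N / 2 := by
      have := (Finset.mem_filter.1 hx₀S).2; exact this
    constructor
    · -- |valMinAbs (x - x₀)| ≤ κ N
      have h1 : (x - x₀).valMinAbs.natAbs ≤ (x.valMinAbs - x₀.valMinAbs).natAbs := by
        apply ZMod.natAbs_min_of_le_div_two N
        · push_cast [ZMod.coe_valMinAbs]; ring
        · exact ZMod.natAbs_valMinAbs_le _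
      have h2 : |(((x - x₀).valMinAbs : ℤ) : ℝ)| ≤ |((x.valMinAbs - x₀.valMinAbs : ℤ) : ℝ)| := by
        rw [← Int.cast_abs, ← Int.cast_abs, Int.cast_le, Int.abs_eq_natAbs, Int.abs_eq_natAbs]
        exact_mod_cast h1
      refine h2.trans ?_
      push_cast
      calc |((x.valMinAbs : ℝ)) - (x₀.valMinAbs : ℝ)| ≤
            |(x.valMinAbs : ℝ)| + |(x₀.valMinAbs : ℝ)| := abs_sub _ _
        _ ≤ κ * N / 2 + κ * N / 2 := add_le_add hxv hx₀v
        _ = κ * N := by ring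
    · -- the nint condition
      intro r hr
      set u : ℤ := ((x * r).val : ℤ) with hudef
      set v : ℤ := ((x₀ * r).val : ℤ) with hvdef
      set w : ℤ := (((x - x₀) * r).val : ℤ) with hwdef
      have hdvd : (N : ℤ) ∣ (w - (u - v)) := by
        rw [← ZMod.intCast_zmod_eq_zero_iff_dvd]
        push_cast
        simp only [hudef, hvdef, hwdef, Int.cast_natCast, ZMod.natCast_val, ZMod.cast_id]
        push_cast
        ring
      obtain ⟨k, hk⟩ := hdvd
      -- floors agree
      have hfl : ⌊(d : ℝ) * ((x * (r : ZMod N)).val : ℝ) / N⌋₊ =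
          ⌊(d : ℝ) * ((x₀ * (r : ZMod N)).val : ℝ) / N⌋₊ := by
        have := congrFun hxf ⟨r, hr⟩
        simpa [hfdef, Fin.mk.injEq] using this
      have huv : |(u : ℝ) / N - (v : ℝ) / N| < 1 / d := by
        set s : ℝ := (d : ℝ) * ((x * (r : ZMod N)).val : ℝ) / N with hsdef
        set t : ℝ := (d : ℝ) * ((x₀ * (r : ZMod N)).val : ℝ) / N with htdef
        have hs0 : 0 ≤ s := by positivity
        have ht0 : 0 ≤ t := by positivity
        have h1 : s < ⌊t⌋₊ + 1 := by rw [← hfl]; exact Nat.lt_floor_add_one s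
        have h2 : t < ⌊s⌋₊ + 1 := by rw [hfl]; exact Nat.lt_floor_add_one t
        have h3 : (⌊s⌋₊ : ℝ) ≤ s := Nat.floor_le hs0
        have h4 : (⌊t⌋₊ : ℝ) ≤ t := Nat.floor_le ht0
        have hst : |s - t| < 1 := by
          rw [abs_sub_lt_iff]; constructor <;> linarith
        have heq : s - t = (d : ℝ) * ((u : ℝ) / N - (v : ℝ) / N) := by
          rw [hsdef, htdef, hudef, hvdef]; push_cast; ring
        rw [heq, abs_mul, abs_of_pos hdposR] at hst
        rw [lt_div_iff₀ hdposR]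
        nlinarith [abs_nonneg ((u : ℝ) / N - (v : ℝ) / N)]
      -- conclude
      have hw : ((((x - x₀) * r).val : ℝ)) / N = ((u : ℝ) / N - (v : ℝ) / N) + k := by
        have : (w : ℝ) = ((u : ℝ) - v) + N * k := by
          have : (w : ℝ) - ((u:ℝ) - v) = N * k := by exact_mod_cast congrArg (Int.cast : ℤ → ℝ) hk
          linarith
        rw [show ((((x - x₀) * r).val : ℕ) : ℝ) = (w : ℝ) by rw [hwdef]; push_cast; ring]
        rw [this]; field_simp
      unfold nint
      rw [hw]
      calc |((u : ℝ) / N - (v : ℝ) / N + k) - round ((u : ℝ) / N - (v : ℝ) / N + k)|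
          ≤ |((u : ℝ) / N - (v : ℝ) / N + k) - (k : ℤ)| := round_le _ k
        _ = |(u : ℝ) / N - (v : ℝ) / N| := by congr 1; push_cast; ring
        _ ≤ 1 / d := le_of_lt huv
        _ ≤ 2 * ε := le_of_lt hd2ε
  -- transfer cardinalities
  have hsub : ((F.image (fun x => x - x₀)) : Set (ZMod N)) ⊆ B := by
    intro z hz
    simp only [Finset.coe_image, Set.mem_image, Finset.mem_coe] at hz
    obtain ⟨x, hx, rfl⟩ := hz
    exact hmem x hx
  have hFcard : (F.card : ℝ) ≤ B.ncard := by
    have h1 : (F.image (fun x => x - x₀)).card = F.card :=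
      Finset.card_image_of_injective _ (sub_left_injective)
    have h2 : ((F.image (fun x => x - x₀)) : Set (ZMod N)).ncard ≤ B.ncard :=
      Set.ncard_le_ncard hsub (Set.toFinite B)
    rw [Set.ncard_coe_finset, h1] at h2
    exact_mod_cast h2
  -- final chain
  have hεm : ε ^ m ≤ (1 / (d : ℝ)) ^ m := pow_le_pow_left₀ hε.le hεd m
  calc ε ^ m * (κ * N - 1) ≤ (1 / (d : ℝ)) ^ m * (κ * N - 1) := by
        apply mul_le_mul_of_nonneg_right hεm h0.le
    _ ≤ (1 / (d : ℝ)) ^ m * S.card := by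
        apply mul_le_mul_of_nonneg_left hScard (by positivity)
    _ ≤ (1 / (d : ℝ)) ^ m * ((d : ℝ) ^ m * F.card) := by
        apply mul_le_mul_of_nonneg_left hy (by positivity)
    _ = F.card := by
        rw [one_div, inv_pow, inv_mul_cancel_left₀ (by positivity)]
    _ ≤ B.ncard := hFcard
end

section
/- Let N be a prime and a, β : Z/NZ → R with β ≥ 0, Σ_x β(x) = 1 (so β̂(0) = 1), and a' = a * β * β (convolution on Z/NZ). Suppose R ⊆ Z/NZ with |â(r)| ≤ δ for all r ∉ R, |â(r)| ≤ 1 for all r, and |1 - β̂(r)⁴β̂(-r)²| ≤ 384ε² for r ∈ R. If moreover Σ_r |â(r)|^{5/2} ≤ C_{5/2} and Σ_r |â(r)|³ ≤ C_3, then |Σ_{x+y=z} a(x)a(y)a(z) - Σ_{x+y=z} a'(x)a'(y)a'(z)| ≤ N^{-1}(384 ε² |R| + 2 C_{5/2}^{2/3} C_3^{1/3} δ^{1/3}). -/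
/-- The Fourier transform on `ℤ/Nℤ`: `f̂(r) = Σ_x f(x) e(-xr/N)`. -/
noncomputable def dft {N : ℕ} [NeZero N] (f : ZMod N → ℂ) (r : ZMod N) : ℂ :=
  ∑ x : ZMod N, f x * Complex.exp (-2 * Real.pi * Complex.I * (((x * r).val : ℝ) / N))

/-- Convolution on `ℤ/Nℤ` of real-valued functions. -/
noncomputable def conv {N : ℕ} [NeZero N] (f g : ZMod N → ℝ) (x : ZMod N) : ℝ :=
  ∑ y : ZMod N, f y * g (x - y)

namespace SmoothAux

open Finset

variable {N : ℕ} [NeZero N]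

noncomputable def eN (N : ℕ) [NeZero N] (t : ZMod N) : ℂ :=
  Complex.exp (-2 * Real.pi * Complex.I * (((t.val : ℝ)) / N))

lemma dft_eq (f : ZMod N → ℂ) (r : ZMod N) :
    dft f r = ∑ x : ZMod N, f x * eN N (x * r) := rfl

lemma eN_eq (t : ZMod N) :
    eN N t = Complex.exp (-2 * Real.pi * Complex.I / N) ^ t.val := by
  have h : (-2 * (Real.pi:ℂ) * Complex.I * (((t.val : ℝ):ℂ) / N))
      = (t.val : ℕ) * (-2 * (Real.pi:ℂ) * Complex.I / N) := by push_cast; ring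
  rw [eN, h, Complex.exp_nat_mul]

omit [NeZero N] in
lemma hprim (hN : N ≠ 0) :
    IsPrimitiveRoot (Complex.exp (-2 * Real.pi * Complex.I / N)) N := by
  have h := (Complex.isPrimitiveRoot_exp N hN).inv
  have heq : (Complex.exp (2 * Real.pi * Complex.I / N))⁻¹
      = Complex.exp (-2 * Real.pi * Complex.I / N) := by
    rw [← Complex.exp_neg]
    congr 1
    ring
  rwa [heq] at h

lemma zeta_pow : (Complex.exp (-2 * Real.pi * Complex.I / N)) ^ N = 1 :=
  (hprim (NeZero.ne N)).pow_eq_one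

lemma eN_add (s t : ZMod N) : eN N (s + t) = eN N s * eN N t := by
  rw [eN_eq, eN_eq, eN_eq, ← pow_add, ZMod.val_add]
  conv_rhs => rw [← Nat.div_add_mod (s.val + t.val) N]
  rw [pow_add, pow_mul, zeta_pow, one_pow, one_mul]

lemma eN_zero : eN N 0 = 1 := by
  rw [eN_eq, ZMod.val_zero, pow_zero]

lemma abs_eN (t : ZMod N) : ‖eN N t‖ = 1 := by
  have h : (-2 * (Real.pi : ℂ) * Complex.I * (((t.val : ℝ) : ℂ) / N))
      = ((-2 * Real.pi * ((t.val : ℝ) / N) : ℝ) : ℂ) * Complex.I := by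
    push_cast; ring
  rw [eN, h, Complex.norm_exp_ofReal_mul_I]

lemma sum_eN_eq_zero [Fact N.Prime] {t : ZMod N} (ht : t ≠ 0) :
    ∑ r : ZMod N, eN N (t * r) = 0 := by
  have hN2 : 1 < N := (Fact.out : N.Prime).one_lt
  have hone : eN N 1 ≠ 1 := by
    rw [eN_eq, ZMod.val_one, pow_one]
    exact (hprim (NeZero.ne N)).ne_one hN2
  have key : eN N 1 * ∑ r : ZMod N, eN N (t * r) = ∑ r : ZMod N, eN N (t * r) := by
    rw [Finset.mul_sum]
    calc ∑ r : ZMod N, eN N 1 * eN N (t * r)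
        = ∑ r : ZMod N, eN N (t * (t⁻¹ + r)) := by
          refine Finset.sum_congr rfl fun r _ => ?_
          rw [mul_add, mul_inv_cancel₀ ht, eN_add]
      _ = ∑ r : ZMod N, eN N (t * r) :=
          Fintype.sum_equiv (Equiv.addLeft t⁻¹) _ _ (fun r => rfl)
  by_contra hS
  exact hone (mul_right_cancel₀ hS (key.trans (one_mul _).symm))

lemma sum_eN_all [Fact N.Prime] (t : ZMod N) :
    ∑ r : ZMod N, eN N (t * r) = if t = 0 then (N : ℂ) else 0 := by
  split_ifs with h
  · subst h
    simp [eN_zero, Finset.card_univ, ZMod.card]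
  · exact sum_eN_eq_zero h

lemma count_eq' [Fact N.Prime] (f g h : ZMod N → ℂ) :
    ∑ r : ZMod N, dft f r * dft g r * dft h (-r)
      = (N : ℂ) * ∑ x : ZMod N, ∑ y : ZMod N, f x * g y * h (x + y) := by
  have expand : ∀ r : ZMod N, dft f r * dft g r * dft h (-r)
      = ∑ x : ZMod N, ∑ z : ZMod N, ∑ y : ZMod N,
          f x * g y * h z * eN N ((x + y - z) * r) := by
    intro r
    rw [dft_eq f, dft_eq g, dft_eq h, Finset.sum_mul_sum, Finset.sum_mul_sum]
    refine Finset.sum_congr rfl fun x _ => ?_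
    refine Finset.sum_congr rfl fun z _ => ?_
    rw [Finset.sum_mul]
    refine Finset.sum_congr rfl fun y _ => ?_
    have he : eN N ((x + y - z) * r)
        = eN N (x * r) * (eN N (y * r) * eN N (z * (-r))) := by
      rw [← eN_add, ← eN_add]
      congr 1
      ring
    rw [he]
    ring
  calc ∑ r : ZMod N, dft f r * dft g r * dft h (-r)
      = ∑ r : ZMod N, ∑ x : ZMod N, ∑ z : ZMod N, ∑ y : ZMod N,
          f x * g y * h z * eN N ((x + y - z) * r) :=
        Finset.sum_congr rfl fun r _ => expand r
    _ = ∑ x : ZMod N, ∑ r : ZMod N, ∑ z : ZMod N, ∑ y : ZMod N,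
          f x * g y * h z * eN N ((x + y - z) * r) := Finset.sum_comm
    _ = ∑ x : ZMod N, ∑ y : ZMod N, ∑ z : ZMod N, ∑ r : ZMod N,
          f x * g y * h z * eN N ((x + y - z) * r) := by
        refine Finset.sum_congr rfl fun x _ => ?_
        calc ∑ r : ZMod N, ∑ z : ZMod N, ∑ y : ZMod N,
              f x * g y * h z * eN N ((x + y - z) * r)
            = ∑ z : ZMod N, ∑ r : ZMod N, ∑ y : ZMod N,
              f x * g y * h z * eN N ((x + y - z) * r) := Finset.sum_comm
          _ = ∑ z : ZMod N, ∑ y : ZMod N, ∑ r : ZMod N,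
              f x * g y * h z * eN N ((x + y - z) * r) :=
              Finset.sum_congr rfl fun z _ => Finset.sum_comm
          _ = ∑ y : ZMod N, ∑ z : ZMod N, ∑ r : ZMod N,
              f x * g y * h z * eN N ((x + y - z) * r) := Finset.sum_comm
    _ = ∑ x : ZMod N, ∑ y : ZMod N, ∑ z : ZMod N,
          f x * g y * h z * (if x + y - z = 0 then (N : ℂ) else 0) := by
        refine Finset.sum_congr rfl fun x _ => Finset.sum_congr rfl fun y _ =>
          Finset.sum_congr rfl fun z _ => ?_
        rw [← Finset.mul_sum, sum_eN_all]
    _ = (N : ℂ) * ∑ x : ZMod N, ∑ y : ZMod N, f x * g y * h (x + y) := by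
        rw [Finset.mul_sum]
        refine Finset.sum_congr rfl fun x _ => ?_
        rw [Finset.mul_sum]
        refine Finset.sum_congr rfl fun y _ => ?_
        simp only [sub_eq_zero, mul_ite, mul_zero, eq_comm (a := x + y)]
        rw [Finset.sum_ite_eq' Finset.univ (x + y) (fun z => f x * g y * h z * N)]
        simp only [Finset.mem_univ, if_true]
        ring

lemma dft_conv (f g : ZMod N → ℝ) (r : ZMod N) :
    dft (fun x => ((conv f g x : ℝ) : ℂ)) r
      = dft (fun x => (f x : ℂ)) r * dft (fun x => (g x : ℂ)) r := by
  rw [dft_eq, dft_eq, dft_eq, Finset.sum_mul_sum]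
  calc ∑ x : ZMod N, ((conv f g x : ℝ) : ℂ) * eN N (x * r)
      = ∑ x : ZMod N, ∑ y : ZMod N, (f y : ℂ) * (g (x - y) : ℂ) * eN N (x * r) := by
        refine Finset.sum_congr rfl fun x _ => ?_
        rw [conv]
        push_cast
        rw [Finset.sum_mul]
    _ = ∑ y : ZMod N, ∑ x : ZMod N, (f y : ℂ) * (g (x - y) : ℂ) * eN N (x * r) :=
        Finset.sum_comm
    _ = ∑ y : ZMod N, ∑ u : ZMod N, (f y : ℂ) * (g u : ℂ) * eN N ((y + u) * r) := by
        refine Finset.sum_congr rfl fun y _ => ?_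
        refine (Fintype.sum_equiv (Equiv.addLeft y) _ _ fun u => ?_).symm
        simp [add_sub_cancel_left]
    _ = ∑ y : ZMod N, (f y : ℂ) * eN N (y * r) * ∑ u : ZMod N, (g u : ℂ) * eN N (u * r) := by
        refine Finset.sum_congr rfl fun y _ => ?_
        rw [Finset.mul_sum]
        refine Finset.sum_congr rfl fun u _ => ?_
        rw [show (y + u) * r = y * r + u * r by ring, eN_add]
        ring
    _ = ∑ y : ZMod N, ∑ u : ZMod N, (f y : ℂ) * eN N (y * r) * ((g u : ℂ) * eN N (u * r)) := by
        refine Finset.sum_congr rfl fun y _ => ?_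
        rw [Finset.mul_sum]

lemma abs_dft_le_one (f : ZMod N → ℝ) (hf : ∀ x, 0 ≤ f x) (h1 : ∑ x : ZMod N, f x = 1)
    (r : ZMod N) : ‖dft (fun x => (f x : ℂ)) r‖ ≤ 1 := by
  rw [dft_eq]
  calc ‖∑ x : ZMod N, (f x : ℂ) * eN N (x * r)‖
      ≤ ∑ x : ZMod N, ‖(f x : ℂ) * eN N (x * r)‖ := norm_sum_le _ _
    _ = ∑ x : ZMod N, f x := by
        refine Finset.sum_congr rfl fun x _ => ?_
        rw [norm_mul, abs_eN, mul_one, Complex.norm_real, Real.norm_eq_abs, abs_of_nonneg (hf x)]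
    _ = 1 := h1

end SmoothAux

set_option maxHeartbeats 1000000 in
open Finset in
/-- Comparison of the Schur-triple counts of `a` and its smoothing
`a' = a * β * β`. -/
theorem smoothing_comparison (N : ℕ) [Fact N.Prime] (a β : ZMod N → ℝ)
    (hβ0 : ∀ x, 0 ≤ β x) (hβ1 : ∑ x : ZMod N, β x = 1)
    (R : Finset (ZMod N)) (δ ε C52 C3 : ℝ) (hδ : 0 < δ) (hε : 0 < ε)
    (hminor : ∀ r ∉ R, ‖dft (fun x => (a x : ℂ)) r‖ ≤ δ)
    (hbd : ∀ r, ‖dft (fun x => (a x : ℂ)) r‖ ≤ 1)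
    (hβR : ∀ r ∈ R,
      ‖1 - (dft (fun x => (β x : ℂ)) r) ^ 4 *
        (dft (fun x => (β x : ℂ)) (-r)) ^ 2‖ ≤ 384 * ε ^ 2)
    (h52 : ∑ r : ZMod N, (‖dft (fun x => (a x : ℂ)) r‖) ^ ((5 : ℝ) / 2) ≤ C52)
    (h3 : ∑ r : ZMod N, (‖dft (fun x => (a x : ℂ)) r‖) ^ (3 : ℕ) ≤ C3) :
    |(∑ x : ZMod N, ∑ y : ZMod N, a x * a y * a (x + y)) -
      ∑ x : ZMod N, ∑ y : ZMod N,
        conv (conv a β) β x * conv (conv a β) β y * conv (conv a β) β (x + y)|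
      ≤ (N : ℝ)⁻¹ * (384 * ε ^ 2 * R.card +
          2 * C52 ^ ((2 : ℝ) / 3) * C3 ^ ((1 : ℝ) / 3) * δ ^ ((1 : ℝ) / 3)) := by
  classical
  have hNpos : 0 < N := (Fact.out : N.Prime).pos
  have hNC : (N : ℂ) ≠ 0 := by exact_mod_cast hNpos.ne'
  set F : ZMod N → ℂ := dft (fun x => (a x : ℂ)) with hF
  set B : ZMod N → ℂ := dft (fun x => (β x : ℂ)) with hB
  have hdfta' : ∀ r, dft (fun x => ((conv (conv a β) β x : ℝ) : ℂ)) r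
      = F r * B r * B r := fun r => by
    rw [SmoothAux.dft_conv, SmoothAux.dft_conv, hF, hB]
  have key1 : ((∑ x : ZMod N, ∑ y : ZMod N, a x * a y * a (x + y) : ℝ) : ℂ)
      = (N : ℂ)⁻¹ * ∑ r : ZMod N, F r * F r * F (-r) := by
    rw [hF, SmoothAux.count_eq', inv_mul_cancel_left₀ hNC]
    push_cast
    rfl
  have key2 : ((∑ x : ZMod N, ∑ y : ZMod N,
        conv (conv a β) β x * conv (conv a β) β y * conv (conv a β) β (x + y) : ℝ) : ℂ)
      = (N : ℂ)⁻¹ * ∑ r : ZMod N, (F r * B r * B r) * (F r * B r * B r)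
          * (F (-r) * B (-r) * B (-r)) := by
    have h := SmoothAux.count_eq' (N := N)
      (fun x => ((conv (conv a β) β x : ℝ) : ℂ))
      (fun x => ((conv (conv a β) β x : ℝ) : ℂ))
      (fun x => ((conv (conv a β) β x : ℝ) : ℂ))
    simp only [hdfta'] at h
    rw [h, inv_mul_cancel_left₀ hNC]
    push_cast
    rfl
  set D : ℝ := (∑ x : ZMod N, ∑ y : ZMod N, a x * a y * a (x + y)) -
      ∑ x : ZMod N, ∑ y : ZMod N,
        conv (conv a β) β x * conv (conv a β) β y * conv (conv a β) β (x + y) with hD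
  have keyD : ((D : ℝ) : ℂ)
      = (N : ℂ)⁻¹ * ∑ r : ZMod N, F r ^ 2 * F (-r) * (1 - B r ^ 4 * B (-r) ^ 2) := by
    rw [hD, Complex.ofReal_sub, key1, key2, ← mul_sub, ← Finset.sum_sub_distrib]
    congr 1
    exact Finset.sum_congr rfl fun r _ => by ring
  -- pointwise term
  have habsF : ∀ r, 0 ≤ ‖F r‖ := fun r => norm_nonneg _
  have hBle : ∀ r, ‖B r‖ ≤ 1 := fun r => by
    rw [hB]; exact SmoothAux.abs_dft_le_one β hβ0 hβ1 r
  have habs_le : |D| ≤ (N : ℝ)⁻¹ * ∑ r : ZMod N,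
      ‖F r‖ ^ 2 * ‖F (-r)‖
        * ‖1 - B r ^ 4 * B (-r) ^ 2‖ := by
    calc |D| = ‖((D : ℝ) : ℂ)‖ := by rw [Complex.norm_real, Real.norm_eq_abs]
      _ = (N : ℝ)⁻¹ * ‖∑ r : ZMod N,
            F r ^ 2 * F (-r) * (1 - B r ^ 4 * B (-r) ^ 2)‖ := by
          rw [keyD, norm_mul, norm_inv, Complex.norm_natCast]
      _ ≤ _ := by
          refine mul_le_mul_of_nonneg_left ?_ (by positivity)
          refine (norm_sum_le _ _).trans_eq ?_
          refine Finset.sum_congr rfl fun r _ => ?_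
          rw [norm_mul, norm_mul, norm_pow]
  -- split the sum
  set T : ZMod N → ℝ := fun r => ‖F r‖ ^ 2 * ‖F (-r)‖
      * ‖1 - B r ^ 4 * B (-r) ^ 2‖ with hT
  have hTnonneg : ∀ r, 0 ≤ T r := fun r => by positivity
  have hsplit : ∑ r : ZMod N, T r = ∑ r ∈ R, T r + ∑ r ∈ Rᶜ, T r :=
    (Finset.sum_add_sum_compl R T).symm
  -- major arcs
  have hmajor : ∑ r ∈ R, T r ≤ 384 * ε ^ 2 * R.card := by
    calc ∑ r ∈ R, T r ≤ ∑ r ∈ R, 384 * ε ^ 2 := by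
          refine Finset.sum_le_sum fun r hr => ?_
          have h1 : ‖F r‖ ^ 2 * ‖F (-r)‖ ≤ 1 := by
            nlinarith [hbd r, hbd (-r), habsF r, habsF (-r)]
          have h2 := hβR r hr
          have h0 : (0:ℝ) ≤ ‖1 - B r ^ 4 * B (-r) ^ 2‖ := norm_nonneg _
          calc T r ≤ 1 * ‖1 - B r ^ 4 * B (-r) ^ 2‖ :=
                mul_le_mul_of_nonneg_right h1 h0
            _ = ‖1 - B r ^ 4 * B (-r) ^ 2‖ := one_mul _
            _ ≤ 384 * ε ^ 2 := h2
      _ = 384 * ε ^ 2 * R.card := by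
          rw [Finset.sum_const, nsmul_eq_mul, mul_comm]
  -- minor arcs
  have hminor2 : ∀ r, r ∉ R → T r ≤ 2 * δ ^ ((1:ℝ)/3)
      * (‖F r‖ ^ ((5:ℝ)/3) * ‖F (-r)‖) := by
    intro r hr
    have hc2 : ‖1 - B r ^ 4 * B (-r) ^ 2‖ ≤ 2 := by
      have h1 : ‖1 - B r ^ 4 * B (-r) ^ 2‖
          ≤ 1 + ‖B r ^ 4 * B (-r) ^ 2‖ := by
        have hsl := norm_sub_le_norm_sub_add_norm_sub 1 0 (B r ^ 4 * B (-r) ^ 2)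
        rw [sub_zero, zero_sub, norm_one, norm_neg] at hsl
        exact hsl
      have h2 : ‖B r ^ 4 * B (-r) ^ 2‖ ≤ 1 := by
        rw [norm_mul, norm_pow, norm_pow]
        have h4 : ‖B r‖ ^ 4 ≤ 1 :=
          pow_le_one₀ (norm_nonneg _) (hBle r)
        have h5 : ‖B (-r)‖ ^ 2 ≤ 1 :=
          pow_le_one₀ (norm_nonneg _) (hBle (-r))
        nlinarith [pow_nonneg (norm_nonneg (B r)) 4,
          pow_nonneg (norm_nonneg (B (-r))) 2]
      linarith
    have hpow : ‖F r‖ ^ 2 ≤ δ ^ ((1:ℝ)/3) * ‖F r‖ ^ ((5:ℝ)/3) := by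
      rcases eq_or_lt_of_le (habsF r) with h0 | h0
      · rw [← h0]
        rw [Real.zero_rpow (by norm_num)]
        simp
      · have hd : ‖F r‖ ≤ δ := hminor r hr
        calc ‖F r‖ ^ 2 = ‖F r‖ ^ ((2:ℝ)) := by
              rw [← Real.rpow_natCast (‖F r‖) 2]; norm_num
          _ = ‖F r‖ ^ ((1:ℝ)/3) * ‖F r‖ ^ ((5:ℝ)/3) := by
              rw [← Real.rpow_add h0]; norm_num
          _ ≤ δ ^ ((1:ℝ)/3) * ‖F r‖ ^ ((5:ℝ)/3) := by
              refine mul_le_mul_of_nonneg_right ?_ (Real.rpow_nonneg (habsF r) _)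
              exact Real.rpow_le_rpow (habsF r) hd (by norm_num)
    calc T r ≤ (‖F r‖ ^ 2 * ‖F (-r)‖) * 2 := by
          rw [hT]
          exact mul_le_mul_of_nonneg_left hc2 (by positivity)
      _ ≤ ((δ ^ ((1:ℝ)/3) * ‖F r‖ ^ ((5:ℝ)/3)) * ‖F (-r)‖) * 2 := by
          refine mul_le_mul_of_nonneg_right (mul_le_mul_of_nonneg_right hpow (habsF _)) (by norm_num)
      _ = 2 * δ ^ ((1:ℝ)/3) * (‖F r‖ ^ ((5:ℝ)/3) * ‖F (-r)‖) := by
          ring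
  -- Hoelder
  have hC52nonneg : 0 ≤ C52 := le_trans (Finset.sum_nonneg fun r _ =>
    Real.rpow_nonneg (habsF r) _) (by rw [hF] at *; exact h52)
  have hC3nonneg : 0 ≤ C3 := le_trans (Finset.sum_nonneg fun r _ =>
    pow_nonneg (norm_nonneg _) _) (by rw [hF] at *; exact h3)
  have hpq : Real.HolderConjugate ((3:ℝ)/2) 3 := ⟨by norm_num, by norm_num, by norm_num⟩
  have hold : ∑ r : ZMod N, ‖F r‖ ^ ((5:ℝ)/3) * ‖F (-r)‖
      ≤ C52 ^ ((2:ℝ)/3) * C3 ^ ((1:ℝ)/3) := by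
    have h := Real.inner_le_Lp_mul_Lq_of_nonneg (s := Finset.univ)
      (f := fun r : ZMod N => ‖F r‖ ^ ((5:ℝ)/3))
      (g := fun r : ZMod N => ‖F (-r)‖) hpq
      (fun i _ => Real.rpow_nonneg (habsF i) _) (fun i _ => habsF _)
    have e1 : ∑ r : ZMod N, (‖F r‖ ^ ((5:ℝ)/3)) ^ ((3:ℝ)/2)
        = ∑ r : ZMod N, ‖F r‖ ^ ((5:ℝ)/2) := by
      refine Finset.sum_congr rfl fun r _ => ?_
      rw [← Real.rpow_mul (habsF r)]
      norm_num
    have e2 : ∑ r : ZMod N, ‖F (-r)‖ ^ ((3:ℝ))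
        = ∑ r : ZMod N, ‖F r‖ ^ (3:ℕ) := by
      refine Fintype.sum_equiv (Equiv.neg (ZMod N)) _ _ fun r => ?_
      rw [Equiv.neg_apply, show ((3:ℝ)) = ((3:ℕ):ℝ) by norm_num,
        Real.rpow_natCast]
    rw [e1, e2] at h
    have hle : (∑ r : ZMod N, ‖F r‖ ^ ((5:ℝ)/2)) ^ (1/((3:ℝ)/2))
          * (∑ r : ZMod N, ‖F r‖ ^ (3:ℕ)) ^ (1/(3:ℝ))
        ≤ C52 ^ ((2:ℝ)/3) * C3 ^ ((1:ℝ)/3) := by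
      have b1 : (∑ r : ZMod N, ‖F r‖ ^ ((5:ℝ)/2)) ^ (1/((3:ℝ)/2))
          ≤ C52 ^ ((2:ℝ)/3) := by
        rw [show 1/((3:ℝ)/2) = (2:ℝ)/3 by norm_num]
        refine Real.rpow_le_rpow (Finset.sum_nonneg fun r _ =>
          Real.rpow_nonneg (habsF r) _) ?_ (by norm_num)
        rw [hF] at *; exact h52
      have b2 : (∑ r : ZMod N, ‖F r‖ ^ (3:ℕ)) ^ (1/(3:ℝ))
          ≤ C3 ^ ((1:ℝ)/3) := by
        rw [show 1/(3:ℝ) = (1:ℝ)/3 by norm_num]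
        refine Real.rpow_le_rpow (Finset.sum_nonneg fun r _ =>
          pow_nonneg (norm_nonneg _) _) ?_ (by norm_num)
        rw [hF] at *; exact h3
      exact mul_le_mul b1 b2 (Real.rpow_nonneg (Finset.sum_nonneg fun r _ =>
        pow_nonneg (norm_nonneg _) _) _) (Real.rpow_nonneg hC52nonneg _)
    exact h.trans hle
  -- minor arc sum bound
  have hminorsum : ∑ r ∈ Rᶜ, T r
      ≤ 2 * C52 ^ ((2:ℝ)/3) * C3 ^ ((1:ℝ)/3) * δ ^ ((1:ℝ)/3) := by
    calc ∑ r ∈ Rᶜ, T r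
        ≤ ∑ r ∈ Rᶜ, 2 * δ ^ ((1:ℝ)/3)
            * (‖F r‖ ^ ((5:ℝ)/3) * ‖F (-r)‖) := by
          refine Finset.sum_le_sum fun r hr => hminor2 r (by simpa using hr)
      _ = 2 * δ ^ ((1:ℝ)/3) * ∑ r ∈ Rᶜ,
            ‖F r‖ ^ ((5:ℝ)/3) * ‖F (-r)‖ := by
          rw [Finset.mul_sum]
      _ ≤ 2 * δ ^ ((1:ℝ)/3) * ∑ r : ZMod N,
            ‖F r‖ ^ ((5:ℝ)/3) * ‖F (-r)‖ := by
          refine mul_le_mul_of_nonneg_left ?_ (by positivity)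
          refine Finset.sum_le_sum_of_subset_of_nonneg (Finset.subset_univ _) fun r _ _ =>
            mul_nonneg (Real.rpow_nonneg (habsF r) _) (habsF _)
      _ ≤ 2 * δ ^ ((1:ℝ)/3) * (C52 ^ ((2:ℝ)/3) * C3 ^ ((1:ℝ)/3)) := by
          refine mul_le_mul_of_nonneg_left hold (by positivity)
      _ = 2 * C52 ^ ((2:ℝ)/3) * C3 ^ ((1:ℝ)/3) * δ ^ ((1:ℝ)/3) := by ring
  -- assemble
  calc |D| ≤ (N : ℝ)⁻¹ * ∑ r : ZMod N, T r := habs_le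
    _ ≤ (N : ℝ)⁻¹ * (384 * ε ^ 2 * R.card +
          2 * C52 ^ ((2:ℝ)/3) * C3 ^ ((1:ℝ)/3) * δ ^ ((1:ℝ)/3)) := by
        refine mul_le_mul_of_nonneg_left ?_ (by positivity)
        rw [hsplit]
        exact add_le_add hmajor hminorsum
end
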